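/- Let m = 2y + p with y, p ≥ 0. Define Λ(y, p) to be the multiset of partitions of ⌈3m/2⌉ of the form 1^{⌈m/2⌉} + η + π, where η is a partition of 2y with all parts even, π is a sequence of y+1 non-negative integers summing to p, and the Pieri condition π_{i+1} + η_{i+1} ≤ η_i holds for all i (indices padded by zeros; the sum is taken entrywise). Then: (a) every element of Λ(y, p) has exactly ⌈m/2⌉ parts; (b) the multiplicity of a partition μ of ⌈3m/2⌉ in Λ(y, p) equals the Littlewood–Richardson multiplicity of V_{μ'} in Ind_{S_{2y} × S_p}^{S_m}((⊕_{τ ⊢ y} V_{2τ}) ⊠ triv), where μ' is the partition of m obtained by deleting the first column of μ. -/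

import Mathlib

/-- A partition: an antitone, eventually-zero sequence of natural-number parts.
`parts 0` is the largest part. -/
structure Partn where
  parts : ℕ → ℕ
  antitone' : ∀ ⦃i j : ℕ⦄, i ≤ j → parts j ≤ parts i
  bdd : ∃ N, parts N = 0

namespace Partn

theorem ext' {p q : Partn} (h : p.parts = q.parts) : p = q := by
  cases p; cases q; simpa using h

/-- The number of (nonzero) parts, i.e. the number of rows of the Young diagram. -/
noncomputable def numParts (p : Partn) : ℕ := Nat.find p.bdd

/-- The size of the partition (the number it partitions). -/
noncomputable def size (p : Partn) : ℕ := ∑ i ∈ Finset.range p.numParts, p.parts i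

/-- ν/η is a horizontal strip (Pieri rule for inducing with the trivial rep). -/
def HStrip (η ν : Partn) : Prop :=
  (∀ i, η.parts i ≤ ν.parts i) ∧ (∀ i, ν.parts (i + 1) ≤ η.parts i)

/-- ν/η is a vertical strip (Pieri rule for inducing with the sign rep). -/
def VStrip (η ν : Partn) : Prop :=
  (∀ i, η.parts i ≤ ν.parts i) ∧ (∀ i, ν.parts i ≤ η.parts i + 1)

/-- μ is the partition (n − |λ|, λ₁, …, λ_k) of n, obtained by padding λ with a new
first part. -/
def IsPad (l : Partn) (n : ℕ) (μ : Partn) : Prop :=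
  μ.size = n ∧ μ.parts 0 = n - l.size ∧ l.size + l.parts 0 ≤ n ∧
    ∀ i, μ.parts (i + 1) = l.parts i

/-- The conjugate partition. -/
noncomputable def conj (p : Partn) : Partn where
  parts i := Nat.find (p := fun j => p.parts j ≤ i)
    ⟨Nat.find p.bdd, le_of_eq_of_le (Nat.find_spec p.bdd) (Nat.zero_le i)⟩
  antitone' := by
    intro i j hij
    exact Nat.find_mono fun k hk => le_trans hk hij
  bdd := by
    refine ⟨p.parts 0, ?_⟩
    have : p.parts 0 ≤ p.parts 0 := le_refl _
    simpa using Nat.find_eq_zero _ |>.mpr this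

/-- A representation of Sₙ, recorded by its multiplicity function on partitions of n:
`A μ` is the multiplicity of the irreducible V_μ. -/
abbrev RepM := Partn → ℕ

/-- Church–Farb (uniform) representation stability at `N` for a consistent sequence,
expressed via multiplicities: for `n ≥ N` the multiplicity of each padded irreducible
V(λ)ₙ is independent of `n`, and irreducibles whose padding does not exist at level `N`
do not occur.  (Axioms (1) and (2) of Church–Farb, injectivity and generation, hold
automatically for the sequences considered here.) -/
def StableAt (A : ℕ → RepM) (N : ℕ) : Prop :=
  (∀ n, N ≤ n → ∀ (l μ μ' : Partn), IsPad l n μ → IsPad l (n + 1) μ' →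
    A n μ = A (n + 1) μ') ∧
  (∀ n, N ≤ n → ∀ μ : Partn, μ.size = n →
    N < (n - μ.parts 0) + μ.parts 1 → A n μ = 0)

/-- Sharp stabilization at `N`: stable at `N` but not at `N − 1`. -/
def SharplyStableAt (A : ℕ → RepM) (N : ℕ) : Prop :=
  StableAt A N ∧ ¬ StableAt A (N - 1)

end Partn

namespace Partn

/-- The partition `2λ` obtained by doubling each part of `λ`. -/
def double (l : Partn) : Partn where
  parts i := 2 * l.parts i
  antitone' := by intro i j hij; exact Nat.mul_le_mul_left 2 (l.antitone' hij)
  bdd := ⟨Nat.find l.bdd, by simp [Nat.find_spec l.bdd]⟩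

/-- The partition `1^k`. -/
def ones (k : ℕ) : Partn where
  parts i := if i < k then 1 else 0
  antitone' := by intro i j hij; (try dsimp only); split <;> split <;> omega
  bdd := ⟨k, by simp⟩

/-- Entrywise sum of partitions. -/
def add (p q : Partn) : Partn where
  parts i := p.parts i + q.parts i
  antitone' := fun _ _ h => Nat.add_le_add (p.antitone' h) (q.antitone' h)
  bdd := by
    refine ⟨Nat.find p.bdd + Nat.find q.bdd, ?_⟩
    have h1 : p.parts (Nat.find p.bdd + Nat.find q.bdd) = 0 :=
      Nat.le_zero.mp (le_of_le_of_eq (p.antitone' (Nat.le_add_right _ _))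
        (Nat.find_spec p.bdd))
    have h2 : q.parts (Nat.find p.bdd + Nat.find q.bdd) = 0 :=
      Nat.le_zero.mp (le_of_le_of_eq (q.antitone' (Nat.le_add_left _ _))
        (Nat.find_spec q.bdd))
    simp [h1, h2]

/-- The partition obtained by deleting the first column of the Young diagram. -/
def delFirstCol (p : Partn) : Partn where
  parts i := p.parts i - 1
  antitone' := fun _ _ h => Nat.sub_le_sub_right (p.antitone' h) 1
  bdd := ⟨Nat.find p.bdd, by simp [Nat.find_spec p.bdd]⟩

end Partn

/-- The multiset `Λ(y, p)` of partitions of `⌈3m/2⌉`, `m = 2y + p`, recorded by its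
multiplicity function: `LamMult y p μ` is the number of pairs `(η, π)` with `η` a
partition of `2y` with all parts even, `π` a sequence of `y+1` non-negative
integers summing to `p` satisfying the Pieri condition `π_{i+1} + η_{i+1} ≤ η_i`,
such that `μ = 1^{⌈m/2⌉} + η + π` (entrywise). -/
noncomputable def LamMult (y p : ℕ) (μ : Partn) : ℕ :=
  Set.ncard {x : Partn × (ℕ → ℕ) |
    x.1.size = 2 * y ∧ (∀ i, 2 ∣ x.1.parts i) ∧
    (∀ i, y + 1 ≤ i → x.2 i = 0) ∧ (∑ i ∈ Finset.range (y + 1), x.2 i) = p ∧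
    (∀ i, x.2 (i + 1) + x.1.parts (i + 1) ≤ x.1.parts i) ∧
    (∀ i, μ.parts i =
      (Partn.ones ((2 * y + p + 1) / 2)).parts i + x.1.parts i + x.2 i)}

namespace Partn

theorem parts_numParts (p : Partn) : p.parts p.numParts = 0 := Nat.find_spec p.bdd

theorem parts_eq_zero (p : Partn) {i : ℕ} (h : p.numParts ≤ i) : p.parts i = 0 :=
  Nat.le_zero.mp ((p.antitone' h).trans (le_of_eq (parts_numParts p)))

theorem parts_ne_zero (p : Partn) {i : ℕ} (h : i < p.numParts) : p.parts i ≠ 0 :=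
  Nat.find_min p.bdd h

theorem numParts_le (p : Partn) {N : ℕ} (h : p.parts N = 0) : p.numParts ≤ N :=
  Nat.find_min' p.bdd h

theorem size_eq_sum (p : Partn) {N : ℕ} (h : p.numParts ≤ N) :
    p.size = ∑ i ∈ Finset.range N, p.parts i :=
  Finset.sum_subset (Finset.range_subset_range.2 h) fun i _ hi =>
    p.parts_eq_zero (by simp only [Finset.mem_range, not_lt] at hi; exact hi)

theorem numParts_le_size (p : Partn) : p.numParts ≤ p.size := by
  have h : ∀ i ∈ Finset.range p.numParts, 1 ≤ p.parts i := fun i hi =>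
    Nat.one_le_iff_ne_zero.2 (p.parts_ne_zero (Finset.mem_range.1 hi))
  calc p.numParts = ∑ _i ∈ Finset.range p.numParts, 1 := by simp
    _ ≤ ∑ i ∈ Finset.range p.numParts, p.parts i := Finset.sum_le_sum h
    _ = p.size := rfl

/-- Halving each part of a partition. -/
def halve (p : Partn) : Partn where
  parts i := p.parts i / 2
  antitone' := fun _ _ h => Nat.div_le_div_right (p.antitone' h)
  bdd := ⟨Nat.find p.bdd, by simp [Nat.find_spec p.bdd]⟩

theorem ones_parts (k i : ℕ) : (ones k).parts i = if i < k then 1 else 0 := rfl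

theorem double_parts (p : Partn) (i : ℕ) : p.double.parts i = 2 * p.parts i := rfl

theorem halve_parts (p : Partn) (i : ℕ) : p.halve.parts i = p.parts i / 2 := rfl

theorem delFirstCol_parts (p : Partn) (i : ℕ) : p.delFirstCol.parts i = p.parts i - 1 := rfl

theorem double_halve {p : Partn} (h : ∀ i, 2 ∣ p.parts i) : p.halve.double = p :=
  ext' (funext fun i => Nat.mul_div_cancel' (h i))

theorem halve_double (p : Partn) : p.double.halve = p :=
  ext' (funext fun i => by
    show 2 * p.parts i / 2 = p.parts i
    omega)

theorem double_numParts (p : Partn) : p.double.numParts = p.numParts := by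
  apply le_antisymm
  · exact numParts_le _ (by show 2 * p.parts _ = 0; rw [p.parts_numParts])
  · refine numParts_le _ ?_
    have h := p.double.parts_numParts
    rw [double_parts] at h
    omega

theorem double_size (p : Partn) : p.double.size = 2 * p.size := by
  unfold size
  rw [double_numParts, Finset.mul_sum]
  rfl

/-- Key structural lemma about a member `(η, π)` of the set defining `LamMult`. -/
theorem main_aux (y p : ℕ) (μ η : Partn) (π : ℕ → ℕ)
    (hηs : η.size = 2 * y) (hev : ∀ i, 2 ∣ η.parts i)
    (hsupp : ∀ i, y + 1 ≤ i → π i = 0)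
    (hsum : (∑ i ∈ Finset.range (y + 1), π i) = p)
    (hpieri : ∀ i, π (i + 1) + η.parts (i + 1) ≤ η.parts i)
    (heq : ∀ i, μ.parts i = (ones ((2 * y + p + 1) / 2)).parts i + η.parts i + π i) :
    μ.numParts = (2 * y + p + 1) / 2 ∧ μ.size = (3 * (2 * y + p) + 1) / 2 ∧
      (∀ i, μ.delFirstCol.parts i = η.parts i + π i) := by
  set k := (2 * y + p + 1) / 2 with hk
  have hyk : y ≤ k := by omega
  -- η has at most y parts
  have h2n : 2 * η.numParts ≤ η.size := by
    calc 2 * η.numParts = ∑ _i ∈ Finset.range η.numParts, (2 : ℕ) := by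
          simp [mul_comm]
      _ ≤ ∑ i ∈ Finset.range η.numParts, η.parts i := by
          refine Finset.sum_le_sum fun i hi => ?_
          exact Nat.le_of_dvd (Nat.pos_of_ne_zero
            (η.parts_ne_zero (Finset.mem_range.1 hi))) (hev i)
      _ = η.size := rfl
  have hηn : η.numParts ≤ y := by omega
  have hη0 : ∀ i, y ≤ i → η.parts i = 0 := fun i hi => η.parts_eq_zero (hηn.trans hi)
  have hπ0 : ∀ i, k ≤ i → π i = 0 := by
    intro i hi
    rcases le_or_gt (y + 1) i with h | h
    · exact hsupp i h
    · have hp0 : p = 0 := by omega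
      exact Finset.sum_eq_zero_iff.mp (hp0 ▸ hsum) i (Finset.mem_range.2 h)
  have hμge : ∀ i, k ≤ i → μ.parts i = 0 := by
    intro i hi
    rw [heq i, ones_parts, if_neg (by omega), hη0 i (hyk.trans hi), hπ0 i hi]
  have hμlt : ∀ i, i < k → μ.parts i ≠ 0 := by
    intro i hi
    rw [heq i, ones_parts, if_pos hi]
    omega
  have hnum : μ.numParts = k := by
    refine le_antisymm (numParts_le _ (hμge k le_rfl)) (le_of_not_gt fun h => ?_)
    exact hμlt _ h μ.parts_numParts
  refine ⟨hnum, ?_, ?_⟩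
  · have hsz : μ.size = ∑ i ∈ Finset.range k, μ.parts i := size_eq_sum μ (le_of_eq hnum)
    have e1 : (∑ i ∈ Finset.range k, (ones k).parts i) = k := by
      rw [Finset.sum_congr rfl (fun i hi => by
        rw [ones_parts, if_pos (Finset.mem_range.1 hi)])]
      simp
    have e2 : (∑ i ∈ Finset.range k, η.parts i) = 2 * y :=
      (size_eq_sum η (hηn.trans hyk)).symm.trans hηs
    have e3 : (∑ i ∈ Finset.range k, π i) = p := by
      have h1 : (∑ i ∈ Finset.range (k + (y + 1)), π i)
          = ∑ i ∈ Finset.range (y + 1), π i := by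
        refine (Finset.sum_subset (Finset.range_subset_range.2 (by omega)) ?_).symm
        intro i _ hi
        simp only [Finset.mem_range, not_lt] at hi
        exact hsupp i hi
      have h2 : (∑ i ∈ Finset.range (k + (y + 1)), π i)
          = ∑ i ∈ Finset.range k, π i := by
        refine (Finset.sum_subset (Finset.range_subset_range.2 (by omega)) ?_).symm
        intro i _ hi
        simp only [Finset.mem_range, not_lt] at hi
        exact hπ0 i hi
      rw [← h2, h1, hsum]
    have : μ.size = k + 2 * y + p := by
      rw [hsz, Finset.sum_congr rfl (fun i _ => heq i), Finset.sum_add_distrib,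
        Finset.sum_add_distrib, e1, e2, e3]
    omega
  · intro i
    rw [delFirstCol_parts]
    rcases le_or_gt k i with hi | hi
    · rw [hμge i hi, hη0 i (hyk.trans hi), hπ0 i hi]
    · have := heq i
      rw [ones_parts, if_pos hi] at this
      omega

end Partn

open Partn

/-- with `m = 2y + p`: (a) every element of the multiset `Λ(y, p)` has
exactly `⌈m/2⌉` parts (and is a partition of `⌈3m/2⌉`); (b) for a partition `μ` of
`⌈3m/2⌉` with exactly `⌈m/2⌉` parts, the multiplicity of `μ` in `Λ(y, p)` equals the
Littlewood–Richardson (Pieri) multiplicity of `V_{μ'}` in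
`Ind_{S_{2y} × S_p}^{S_m}((⊕_{τ ⊢ y} V_{2τ}) ⊠ triv)`, where `μ'` is obtained from
`μ` by deleting the first column: the number of partitions `τ` of `y` with `μ'/2τ` a
horizontal strip. -/
theorem lambda_multiset_littlewood_richardson (y p : ℕ) :
    (∀ μ : Partn, LamMult y p μ ≠ 0 →
      μ.numParts = (2 * y + p + 1) / 2 ∧ μ.size = (3 * (2 * y + p) + 1) / 2) ∧
    (∀ μ : Partn, μ.size = (3 * (2 * y + p) + 1) / 2 →
      μ.numParts = (2 * y + p + 1) / 2 →
      LamMult y p μ =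
        Set.ncard {τ : Partn | τ.size = y ∧ Partn.HStrip τ.double μ.delFirstCol}) := by
  constructor
  · intro μ hμ
    obtain ⟨x, h1, h2, h3, h4, h5, h6⟩ := Set.nonempty_of_ncard_ne_zero hμ
    obtain ⟨hn, hs, -⟩ := main_aux y p μ x.1 x.2 h1 h2 h3 h4 h5 h6
    exact ⟨hn, hs⟩
  · intro μ hsize hnum
    set k := (2 * y + p + 1) / 2 with hk
    set S : Set (Partn × (ℕ → ℕ)) := {x : Partn × (ℕ → ℕ) |
      x.1.size = 2 * y ∧ (∀ i, 2 ∣ x.1.parts i) ∧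
      (∀ i, y + 1 ≤ i → x.2 i = 0) ∧ (∑ i ∈ Finset.range (y + 1), x.2 i) = p ∧
      (∀ i, x.2 (i + 1) + x.1.parts (i + 1) ≤ x.1.parts i) ∧
      (∀ i, μ.parts i = (Partn.ones k).parts i + x.1.parts i + x.2 i)} with hS
    have hμ0 : ∀ i, k ≤ i → μ.parts i = 0 := fun i hi =>
      μ.parts_eq_zero (le_of_eq_of_le hnum hi)
    have hμ1 : ∀ i, i < k → 1 ≤ μ.parts i := fun i hi =>
      Nat.one_le_iff_ne_zero.2 (μ.parts_ne_zero (by rw [hnum]; exact hi))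
    have hinj : Set.InjOn (fun x : Partn × (ℕ → ℕ) => x.1.halve) S := by
      rintro ⟨η, π⟩ ⟨h1, h2, h3, h4, h5, h6⟩ ⟨η', π'⟩ ⟨h1', h2', h3', h4', h5', h6'⟩ heq
      replace h2 : ∀ i, 2 ∣ η.parts i := h2
      replace h2' : ∀ i, 2 ∣ η'.parts i := h2'
      replace h6 : ∀ i, μ.parts i = (ones k).parts i + η.parts i + π i := h6
      replace h6' : ∀ i, μ.parts i = (ones k).parts i + η'.parts i + π' i := h6'
      replace heq : η.halve = η'.halve := heq
      have hη : η = η' := by rw [← double_halve h2, ← double_halve h2', heq]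
      subst hη
      have hπ : π = π' := funext fun i => by
        have t1 := h6 i; have t2 := h6' i; omega
      rw [hπ]
    have key : (fun x : Partn × (ℕ → ℕ) => x.1.halve) '' S
        = {τ : Partn | τ.size = y ∧ Partn.HStrip τ.double μ.delFirstCol} := by
      ext τ
      constructor
      · rintro ⟨⟨η, π⟩, ⟨h1, h2, h3, h4, h5, h6⟩, rfl⟩
        obtain ⟨-, -, hdel⟩ := main_aux y p μ η π h1 h2 h3 h4 h5 h6
        replace h2 : ∀ i, 2 ∣ η.parts i := h2
        replace h5 : ∀ i, π (i + 1) + η.parts (i + 1) ≤ η.parts i := h5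
        replace h1 : η.size = 2 * y := h1
        have hd : η.halve.double = η := double_halve h2
        show η.halve.size = y ∧ Partn.HStrip η.halve.double μ.delFirstCol
        constructor
        · have := double_size η.halve
          rw [hd, h1] at this
          omega
        · rw [hd]
          constructor
          · intro i; rw [hdel i]; exact Nat.le_add_right _ _
          · intro i; rw [hdel (i + 1)]
            have := h5 i; omega
      · rintro ⟨hτs, hst1, hst2⟩
        have hτn : τ.numParts ≤ y := le_of_le_of_eq τ.numParts_le_size hτs
        have hη0 : ∀ i, y ≤ i → τ.double.parts i = 0 := fun i hi =>
          τ.double.parts_eq_zero (by rw [double_numParts]; exact hτn.trans hi)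
        have hsupp : ∀ i, y + 1 ≤ i → μ.delFirstCol.parts i - τ.double.parts i = 0 := by
          intro i hi
          obtain ⟨j, rfl⟩ : ∃ j, i = j + 1 := ⟨i - 1, by omega⟩
          have := (hst2 j).trans (le_of_eq (hη0 j (by omega)))
          omega
        have hμ'n : μ.delFirstCol.numParts ≤ k := by
          refine numParts_le _ ?_
          rw [delFirstCol_parts, hμ0 k le_rfl]
        refine ⟨(τ.double, fun i => μ.delFirstCol.parts i - τ.double.parts i),
          ⟨?_, ?_, ?_, ?_, ?_, ?_⟩, halve_double τ⟩
        · rw [double_size, hτs]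
        · intro i; exact ⟨τ.parts i, rfl⟩
        · exact hsupp
        · -- sum condition
          set N := k + (y + 1) with hN
          have e0 : (∑ i ∈ Finset.range (y + 1), (μ.delFirstCol.parts i - τ.double.parts i))
              = ∑ i ∈ Finset.range N, (μ.delFirstCol.parts i - τ.double.parts i) := by
            refine Finset.sum_subset (Finset.range_subset_range.2 (by omega)) ?_
            intro i _ hi
            simp only [Finset.mem_range, not_lt] at hi
            exact hsupp i hi
          have e1 : (∑ i ∈ Finset.range N, (μ.delFirstCol.parts i - τ.double.parts i))
              + (∑ i ∈ Finset.range N, τ.double.parts i)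
              = ∑ i ∈ Finset.range N, μ.delFirstCol.parts i := by
            rw [← Finset.sum_add_distrib]
            exact Finset.sum_congr rfl fun i _ => Nat.sub_add_cancel (hst1 i)
          have e2 : (∑ i ∈ Finset.range N, τ.double.parts i) = 2 * y := by
            rw [← size_eq_sum τ.double (by rw [double_numParts]; omega), double_size, hτs]
          have e3 : (∑ i ∈ Finset.range N, μ.delFirstCol.parts i)
              = ∑ i ∈ Finset.range k, μ.delFirstCol.parts i := by
            refine (Finset.sum_subset (Finset.range_subset_range.2 (by omega)) ?_).symm
            intro i _ hi
            simp only [Finset.mem_range, not_lt] at hi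
            rw [delFirstCol_parts, hμ0 i hi]; rfl
          have e4 : (∑ i ∈ Finset.range k, μ.delFirstCol.parts i) + k
              = ∑ i ∈ Finset.range k, μ.parts i := by
            have hc : ∀ i ∈ Finset.range k, μ.parts i = μ.delFirstCol.parts i + 1 := by
              intro i hi
              rw [delFirstCol_parts]
              have := hμ1 i (Finset.mem_range.1 hi); omega
            rw [Finset.sum_congr rfl hc, Finset.sum_add_distrib]
            simp
          have e5 : (∑ i ∈ Finset.range k, μ.parts i) = μ.size :=
            (size_eq_sum μ (le_of_eq hnum)).symm
          show (∑ i ∈ Finset.range (y + 1), (μ.delFirstCol.parts i - τ.double.parts i)) = p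
          omega
        · intro i
          show μ.delFirstCol.parts (i + 1) - τ.double.parts (i + 1) + τ.double.parts (i + 1)
            ≤ τ.double.parts i
          have h := hst2 i
          have := Nat.sub_add_cancel (hst1 (i + 1))
          omega
        · intro i
          show μ.parts i = (ones k).parts i + τ.double.parts i
            + (μ.delFirstCol.parts i - τ.double.parts i)
          rw [ones_parts, delFirstCol_parts]
          have h2 := hst1 i
          rw [delFirstCol_parts] at h2
          rcases le_or_gt k i with hi | hi
          · rw [if_neg (by omega)]
            have h3 := hη0 i (by omega)
            have h4 := hμ0 i hi
            omega
          · rw [if_pos hi]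
            have h1 := hμ1 i hi
            omega
    show S.ncard = _
    rw [← key]
    exact (Set.ncard_image_of_injOn hinj).symm
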